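/- For n ≥ 2, the second antiderivative of 𝒫_n given by D^{-2}𝒫_n = C_n⁺ 𝒫_{n+2} + C_n⁻ 𝒫_{n-2} - (C_n⁺ + C_n⁻) 𝒫_n, where C_n⁺ = 1/(4(2n+1)(2n+3)) and C_n⁻ = 1/(4(2n+1)(2n-1)), satisfies: its second derivative equals 𝒫_n, and it vanishes together with its first derivative at x = ±1/2. -/

import Mathlib

/-- The Legendre polynomial `P_n` via the Rodrigues formula. -/
noncomputable def legendreP (n : ℕ) (x : ℝ) : ℝ :=
  (1 / (2^n * n.factorial)) * iteratedDeriv n (fun t : ℝ => (t^2 - 1)^n) x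

/-- The scaled Legendre polynomial `𝒫_n(x) = P_n(2x)`. -/
noncomputable def scaledP (n : ℕ) (x : ℝ) : ℝ := legendreP n (2*x)


open Polynomial

noncomputable def Rp (n : ℕ) : ℝ[X] := derivative^[n] (((X:ℝ[X])^2 - 1)^n)

lemma iteratedDeriv_eval (k : ℕ) (p : ℝ[X]) (x : ℝ) :
    iteratedDeriv k (fun t => p.eval t) x = (derivative^[k] p).eval x := by
  induction k generalizing p x with
  | zero => simp
  | succ k ih =>
    rw [iteratedDeriv_succ', Function.iterate_succ_apply]
    have : deriv (fun t => p.eval t) = fun t => (derivative p).eval t := by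
      funext t; exact Polynomial.deriv p
    rw [this, ih]

lemma legendreP_eq (n : ℕ) (x : ℝ) :
    legendreP n x = (1/(2^n * n.factorial)) * (Rp n).eval x := by
  unfold legendreP Rp
  congr 1
  rw [← iteratedDeriv_eval]
  congr 1
  funext t; simp

lemma scaledP_eq (n : ℕ) (x : ℝ) :
    scaledP n x = (1/(2^n * n.factorial)) * (Rp n).eval (2*x) := by
  rw [scaledP, legendreP_eq]
lemma eval_iter_deriv (a b : ℝ) (n : ℕ) :
    (derivative^[n] (((X:ℝ[X]) - C b)^n * ((X:ℝ[X]) - C a)^n)).eval a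
      = n.factorial * (a - b)^n := by
  rw [Polynomial.iterate_derivative_mul]
  rw [eval_finset_sum]
  rw [Finset.sum_eq_single n]
  · simp [Polynomial.iterate_derivative_X_sub_pow_self]
    ring
  · intro k hk hkn
    have hk' : k < n := by simp at hk; omega
    have : n - k ≠ 0 := by omega
    rw [Polynomial.iterate_derivative_X_sub_pow n k a]
    simp [sub_self, zero_pow this]
  · intro h; simp at h

lemma sq_sub_one_eq : ((X:ℝ[X])^2 - 1) = ((X:ℝ[X]) - C 1) * ((X:ℝ[X]) - C (-1)) := by
  simp [C_1]; ring

lemma Rp_eval_one (n : ℕ) : (Rp n).eval 1 = 2^n * n.factorial := by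
  have := eval_iter_deriv 1 (-1) n
  rw [Rp, sq_sub_one_eq, mul_pow, mul_comm (((X:ℝ[X]) - C 1)^n)]
  rw [this]; norm_num; ring

lemma Rp_eval_neg_one (n : ℕ) : (Rp n).eval (-1) = (-2)^n * n.factorial := by
  have := eval_iter_deriv (-1) 1 n
  rw [Rp, sq_sub_one_eq, mul_pow, this]
  norm_num; ring
lemma inner_key (m : ℕ) :
    derivative (derivative (((X:ℝ[X])^2 - 1)^(m+2))) =
      (((2*m+3)*(2*m+4) : ℕ) : ℝ[X]) * ((X:ℝ[X])^2 - 1)^(m+1)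
      + ((4*(m+1)*(m+2) : ℕ) : ℝ[X]) * ((X:ℝ[X])^2 - 1)^m := by
  simp only [derivative_pow, derivative_mul, derivative_sub, derivative_one, derivative_X,
    derivative_C, derivative_natCast, Nat.add_sub_cancel, mul_one, mul_zero, zero_mul,
    sub_zero, add_zero, zero_add]
  push_cast
  simp only [map_add, map_mul, map_ofNat, map_natCast, map_one]
  rw [pow_succ ((X:ℝ[X])^2 - 1) m]
  ring

lemma key (m : ℕ) :
    derivative (Rp (m+2)) =
      (((2*m+3)*(2*m+4) : ℕ) : ℝ[X]) * Rp (m+1)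
      + ((4*(m+1)*(m+2) : ℕ) : ℝ[X]) * derivative (Rp m) := by
  have h1 : derivative (Rp (m+2))
      = derivative^[m+1] (derivative (derivative (((X:ℝ[X])^2 - 1)^(m+2)))) := by
    rw [Rp, ← Function.iterate_succ_apply' derivative, ← Function.iterate_succ_apply,
      ← Function.iterate_succ_apply]
  have h2 : derivative (Rp m)
      = derivative^[m+1] (((X:ℝ[X])^2 - 1)^m) := by
    rw [Rp, ← Function.iterate_succ_apply' derivative]
  rw [h1, h2, inner_key, iterate_map_add, Rp,
    Polynomial.iterate_derivative_natCast_mul, Polynomial.iterate_derivative_natCast_mul]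
lemma scaledP_hasDerivAt (n : ℕ) (x : ℝ) :
    HasDerivAt (scaledP n)
      (2 * (1/(2^n * n.factorial)) * (derivative (Rp n)).eval (2*x)) x := by
  have hfun : scaledP n = fun y => (1/(2^n * n.factorial : ℝ)) * (Rp n).eval (2*y) :=
    funext (scaledP_eq n)
  rw [hfun]
  have h2 : HasDerivAt (fun y : ℝ => 2*y) 2 x := by
    simpa using (hasDerivAt_id x).const_mul 2
  have := (HasDerivAt.comp x ((Rp n).hasDerivAt (2*x)) h2).const_mul
    (1/(2^n * n.factorial : ℝ))
  refine this.congr_deriv ?_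
  ring

lemma scaledP_differentiable (n : ℕ) : Differentiable ℝ (scaledP n) :=
  fun x => (scaledP_hasDerivAt n x).differentiableAt

lemma deriv_scaledP (n : ℕ) (x : ℝ) :
    deriv (scaledP n) x = 2 * (1/(2^n * n.factorial)) * (derivative (Rp n)).eval (2*x) :=
  (scaledP_hasDerivAt n x).deriv

lemma dK (m : ℕ) (x : ℝ) :
    deriv (scaledP (m+2)) x = (4*(m:ℝ)+6) * scaledP (m+1) x + deriv (scaledP m) x := by
  rw [deriv_scaledP, deriv_scaledP, scaledP_eq, key m, eval_add, eval_mul, eval_mul,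
    eval_natCast, eval_natCast]
  have hf1 : ((m+1).factorial : ℝ) = (m+1) * m.factorial := by
    rw [Nat.factorial_succ]; push_cast; ring
  have hf2 : ((m+2).factorial : ℝ) = (m+2) * (m+1) * m.factorial := by
    rw [Nat.factorial_succ, Nat.factorial_succ]; push_cast; ring
  have hm : (m.factorial : ℝ) ≠ 0 := Nat.cast_ne_zero.mpr m.factorial_ne_zero
  have h2 : (2:ℝ)^m ≠ 0 := pow_ne_zero _ two_ne_zero
  rw [hf1, hf2]
  push_cast
  field_simp
  ring
lemma scaledP_half (m : ℕ) : scaledP m (1/2) = 1 := by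
  rw [scaledP_eq]
  norm_num [Rp_eval_one]
  have hm : (m.factorial : ℝ) ≠ 0 := Nat.cast_ne_zero.mpr m.factorial_ne_zero
  have h2 : (2:ℝ)^m ≠ 0 := pow_ne_zero _ two_ne_zero
  field_simp

lemma scaledP_neg_half (m : ℕ) : scaledP m (-(1:ℝ)/2) = (-1)^m := by
  rw [scaledP_eq]
  have : (2:ℝ) * (-(1:ℝ)/2) = -1 := by norm_num
  rw [this, Rp_eval_neg_one]
  have hm : (m.factorial : ℝ) ≠ 0 := Nat.cast_ne_zero.mpr m.factorial_ne_zero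
  have h2 : (2:ℝ)^m ≠ 0 := pow_ne_zero _ two_ne_zero
  rw [show ((-2:ℝ))^m = (-1)^m * 2^m by rw [← mul_pow]; norm_num]
  field_simp

/-- For `n ≥ 2`, the combination
`D^{-2}𝒫_n = C_n⁺ 𝒫_{n+2} + C_n⁻ 𝒫_{n-2} - (C_n⁺ + C_n⁻) 𝒫_n`, with
`C_n⁺ = 1/(4(2n+1)(2n+3))` and `C_n⁻ = 1/(4(2n+1)(2n-1))`, is a second
antiderivative of `𝒫_n` which vanishes together with its first derivative
at `x = ±1/2`. -/
theorem stmt7 (n : ℕ) (hn : 2 ≤ n) :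
    let Cp : ℝ := 1 / (4 * (2*(n:ℝ) + 1) * (2*(n:ℝ) + 3))
    let Cm : ℝ := 1 / (4 * (2*(n:ℝ) + 1) * (2*(n:ℝ) - 1))
    let Q : ℝ → ℝ := fun x => Cp * scaledP (n+2) x + Cm * scaledP (n-2) x - (Cp + Cm) * scaledP n x
    (∀ x : ℝ, deriv (deriv Q) x = scaledP n x)
    ∧ Q (1/2) = 0 ∧ Q (-(1:ℝ)/2) = 0
    ∧ deriv Q (1/2) = 0 ∧ deriv Q (-(1:ℝ)/2) = 0 := by
  obtain ⟨k, rfl⟩ : ∃ k, n = k + 2 := ⟨n - 2, by omega⟩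
  intro Cp Cm Q
  have hCpv : Cp = 1 / (4*(2*(k:ℝ)+5)*(2*(k:ℝ)+7)) := by
    show (1 / (4 * (2*((k+2:ℕ):ℝ) + 1) * (2*((k+2:ℕ):ℝ) + 3)) : ℝ) = _
    push_cast; ring_nf
  have hCmv : Cm = 1 / (4*(2*(k:ℝ)+5)*(2*(k:ℝ)+3)) := by
    show (1 / (4 * (2*((k+2:ℕ):ℝ) + 1) * (2*((k+2:ℕ):ℝ) - 1)) : ℝ) = _
    push_cast; ring_nf
  have hQ : Q = fun x => Cp * scaledP (k+4) x + Cm * scaledP k x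
      - (Cp + Cm) * scaledP (k+2) x := rfl
  have h5 : (2*(k:ℝ)+5) ≠ 0 := by positivity
  have h7 : (2*(k:ℝ)+7) ≠ 0 := by positivity
  have h3 : (2*(k:ℝ)+3) ≠ 0 := by positivity
  have hd : ∀ x : ℝ, deriv Q x
      = (1/(4*(k:ℝ)+10)) * (scaledP (k+3) x - scaledP (k+1) x) := by
    intro x
    have D4 := (scaledP_differentiable (k+4)) x
    have D0 := (scaledP_differentiable k) x
    have D2 := (scaledP_differentiable (k+2)) x
    rw [hQ, deriv_fun_sub ((D4.const_mul Cp).fun_add (D0.const_mul Cm)) (D2.const_mul _),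
      deriv_fun_add (D4.const_mul Cp) (D0.const_mul Cm), deriv_const_mul Cp D4,
      deriv_const_mul Cm D0, deriv_const_mul _ D2]
    have e4 := dK (k+2) x
    rw [show k+2+2=k+4 from rfl, show k+2+1=k+3 from rfl] at e4
    have e2 := dK k x
    rw [e4, e2, hCpv, hCmv]
    push_cast
    field_simp
    ring
  have hd' : deriv Q = fun x => (1/(4*(k:ℝ)+10)) * (scaledP (k+3) x - scaledP (k+1) x) :=
    funext hd
  refine ⟨?_, ?_, ?_, ?_, ?_⟩
  · intro x
    rw [hd', deriv_const_mul _ (((scaledP_differentiable (k+3)) x).fun_sub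
      ((scaledP_differentiable (k+1)) x)),
      deriv_fun_sub ((scaledP_differentiable (k+3)) x) ((scaledP_differentiable (k+1)) x)]
    have e3 := dK (k+1) x
    rw [show k+1+2=k+3 from rfl, show k+1+1=k+2 from rfl] at e3
    rw [e3]
    push_cast
    have : (4*(k:ℝ)+10) ≠ 0 := by positivity
    field_simp
    ring
  · rw [hQ]; simp only [scaledP_half]; ring
  · rw [hQ]; simp only [scaledP_neg_half, pow_add]; ring
  · rw [hd (1/2)]; simp only [scaledP_half]; ring
  · rw [hd (-(1:ℝ)/2)]; simp only [scaledP_neg_half, pow_add]; ring
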